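/- arXiv:2402.12875 — 3 statements merged into one kernel-verified Lean document; each statement's English description precedes it below -/
import Mathlib

section
/- Rounded addition over a finite set of representable numbers is monotone in the first argument: with 𝔽 ⊆ ℝ a finite set containing 0 and round as the closest-point rounding with ties broken toward smaller absolute value, for all x, x', y ∈ 𝔽, x ≥ x' implies round(x + y, 𝔽) ≥ round(x' + y, 𝔽). Consequently the automaton with state space and alphabet 𝔽 and transition δ₊(x, y) = round(x + y, 𝔽) is ordered. -/
/-- `rnd` rounds every real to the closest element of `F`, breaking ties by
choosing the element with smaller absolute value. -/
def IsRound (F : Set ℝ) (rnd : ℝ → ℝ) : Prop :=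
  ∀ x : ℝ, rnd x ∈ F ∧ (∀ y ∈ F, |x - rnd x| ≤ |x - y|) ∧
    (∀ y ∈ F, |x - y| = |x - rnd x| → |rnd x| ≤ |y|)

lemma rnd_mono (F : Set ℝ) (rnd : ℝ → ℝ) (hrnd : IsRound F rnd)
    {a b : ℝ} (hab : a ≤ b) : rnd a ≤ rnd b := by
  by_contra h
  push_neg at h
  obtain ⟨huF, ha1, ha2⟩ := hrnd a
  obtain ⟨hvF, hb1, hb2⟩ := hrnd b
  have h1 := ha1 (rnd b) hvF
  have h2 := hb1 (rnd a) huF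
  have mono : |a - rnd a| - |a - rnd b| ≥ |b - rnd a| - |b - rnd b| := by
    rcases abs_cases (a - rnd a) with ⟨e1, i1⟩ | ⟨e1, i1⟩ <;>
      rcases abs_cases (a - rnd b) with ⟨e2, i2⟩ | ⟨e2, i2⟩ <;>
      rcases abs_cases (b - rnd a) with ⟨e3, i3⟩ | ⟨e3, i3⟩ <;>
      rcases abs_cases (b - rnd b) with ⟨e4, i4⟩ | ⟨e4, i4⟩ <;>
      linarith
  have ea : |a - rnd b| = |a - rnd a| := by linarith
  have eb : |b - rnd a| = |b - rnd b| := by linarith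
  have t1 : |rnd a| ≤ |rnd b| := ha2 (rnd b) hvF ea
  have t2 : |rnd b| ≤ |rnd a| := hb2 (rnd a) huF eb
  have habs : |rnd a| = |rnd b| := le_antisymm t1 t2
  have hneg : rnd a = -rnd b := by
    rcases abs_cases (rnd a) with ⟨f1, g1⟩ | ⟨f1, g1⟩ <;>
      rcases abs_cases (rnd b) with ⟨f2, g2⟩ | ⟨f2, g2⟩ <;> linarith
  have hupos : 0 < rnd a := by
    rcases abs_cases (rnd b) with ⟨f2, g2⟩ | ⟨f2, g2⟩ <;> linarith
  have sqa : (a - rnd b) ^ 2 = (a - rnd a) ^ 2 := by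
    rw [← sq_abs (a - rnd b), ← sq_abs (a - rnd a), ea]
  have sqb : (b - rnd a) ^ 2 = (b - rnd b) ^ 2 := by
    rw [← sq_abs (b - rnd a), ← sq_abs (b - rnd b), eb]
  have ha0 : a = 0 := by nlinarith [sqa, hneg, hupos]
  have hb0 : b = 0 := by nlinarith [sqb, hneg, hupos]
  rw [ha0, hb0] at h
  exact lt_irrefl _ h

/-- Rounded addition over a finite set `F` of representable numbers
containing 0 is monotone in its first argument; equivalently, the automaton with
state space and alphabet `F` and transition `δ₊(x, y) = round(x + y, F)` is
ordered (each letter `y` acts monotonically w.r.t. the usual order on `F ⊆ ℝ`). -/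
theorem rounded_addition_monotone (F : Set ℝ) (hfin : F.Finite) (h0 : (0 : ℝ) ∈ F)
    (rnd : ℝ → ℝ) (hrnd : IsRound F rnd) :
    ∀ x x' y : ℝ, x ∈ F → x' ∈ F → y ∈ F → x' ≤ x → rnd (x' + y) ≤ rnd (x + y) := by
  intro x x' y _ _ _ hle
  exact rnd_mono F rnd hrnd (by linarith)
end

section
/- For every positive integer k, there exists a language in AC⁰ that is not in SIZE[n^k]; i.e., AC⁰ ⊄ SIZE[n^k]. -/
/-- Boolean circuits with fan-in-2 AND/OR gates and NOT gates over `n` inputs. -/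
inductive Circ (n : ℕ) : Type
  | input : Fin n → Circ n
  | not : Circ n → Circ n
  | and : Circ n → Circ n → Circ n
  | or : Circ n → Circ n → Circ n

namespace Circ

def eval {n : ℕ} (x : Fin n → Bool) : Circ n → Bool
  | .input i => x i
  | .not c => !(c.eval x)
  | .and c₁ c₂ => c₁.eval x && c₂.eval x
  | .or c₁ c₂ => c₁.eval x || c₂.eval x

/-- Number of gates (non-input nodes). -/
def size {n : ℕ} : Circ n → ℕ
  | .input _ => 0
  | .not c => c.size + 1
  | .and c₁ c₂ => c₁.size + c₂.size + 1
  | .or c₁ c₂ => c₁.size + c₂.size + 1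

end Circ

/-- Boolean circuits with unbounded fan-in AND/OR gates and NOT gates. -/
inductive ACCirc (n : ℕ) : Type
  | input : Fin n → ACCirc n
  | not : ACCirc n → ACCirc n
  | andn : List (ACCirc n) → ACCirc n
  | orn : List (ACCirc n) → ACCirc n

namespace ACCirc

def eval {n : ℕ} (x : Fin n → Bool) : ACCirc n → Bool
  | .input i => x i
  | .not c => !(c.eval x)
  | .andn cs => cs.attach.all fun c => c.1.eval x
  | .orn cs => cs.attach.any fun c => c.1.eval x
decreasing_by
  all_goals simp only [ACCirc.not.sizeOf_spec, ACCirc.andn.sizeOf_spec, ACCirc.orn.sizeOf_spec]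
  all_goals try omega
  all_goals (have := List.sizeOf_lt_of_mem c.2; omega)

/-- Number of gates (non-input nodes). -/
def size {n : ℕ} : ACCirc n → ℕ
  | .input _ => 0
  | .not c => c.size + 1
  | .andn cs => (cs.attach.map fun c => c.1.size).sum + 1
  | .orn cs => (cs.attach.map fun c => c.1.size).sum + 1
decreasing_by
  all_goals simp only [ACCirc.not.sizeOf_spec, ACCirc.andn.sizeOf_spec, ACCirc.orn.sizeOf_spec]
  all_goals try omega
  all_goals (have := List.sizeOf_lt_of_mem c.2; omega)

def depth {n : ℕ} : ACCirc n → ℕ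
  | .input _ => 0
  | .not c => c.depth + 1
  | .andn cs => (cs.attach.map fun c => c.1.depth).foldr max 0 + 1
  | .orn cs => (cs.attach.map fun c => c.1.depth).foldr max 0 + 1
decreasing_by
  all_goals simp only [ACCirc.not.sizeOf_spec, ACCirc.andn.sizeOf_spec, ACCirc.orn.sizeOf_spec]
  all_goals try omega
  all_goals (have := List.sizeOf_lt_of_mem c.2; omega)

end ACCirc

/-- A language: for each input length, a Boolean function on `{0,1}ⁿ`. -/
def Lang : Type := (n : ℕ) → (Fin n → Bool) → Bool

/-- `L` is decided by fan-in-2 circuits of size `O(T(n))`. -/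
def InSIZE (T : ℕ → ℕ) (L : Lang) : Prop :=
  ∃ C : ℕ, ∀ n : ℕ, ∃ c : Circ n,
    c.size ≤ C * T n + C ∧ ∀ x : Fin n → Bool, c.eval x = L n x

/-- `L` is decided by constant-depth, polynomial-size unbounded fan-in circuits. -/
def InAC0 (L : Lang) : Prop :=
  ∃ (d C k : ℕ), ∀ n : ℕ, ∃ c : ACCirc n,
    c.depth ≤ d ∧ c.size ≤ C * n ^ k + C ∧ ∀ x : Fin n → Bool, c.eval x = L n x

/-! ### Auxiliary machinery -/

section Counting

variable {n : ℕ}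

/-- Symbol alphabet for encoding circuits. -/
abbrev CSym (n : ℕ) := Fin n ⊕ Fin 3

/-- Preorder encoding of a circuit. -/
def Circ.encode : Circ n → List (CSym n)
  | .input i => [Sum.inl i]
  | .not c => Sum.inr 0 :: c.encode
  | .and c₁ c₂ => Sum.inr 1 :: (c₁.encode ++ c₂.encode)
  | .or c₁ c₂ => Sum.inr 2 :: (c₁.encode ++ c₂.encode)

lemma Circ.encode_length (c : Circ n) : c.encode.length ≤ 2 * c.size + 1 := by
  induction c <;> simp [Circ.encode, Circ.size, List.length_append] at * <;> omega

/-- Fuel-based parser, inverse to `encode`. -/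
def Circ.parse : ℕ → List (CSym n) → Option (Circ n × List (CSym n))
  | 0, _ => none
  | _+1, [] => none
  | _+1, (Sum.inl i) :: r => some (.input i, r)
  | f+1, (Sum.inr s) :: r =>
    if (s : ℕ) = 0 then
      match Circ.parse f r with
      | none => none
      | some (c, r') => some (.not c, r')
    else if (s : ℕ) = 1 then
      match Circ.parse f r with
      | none => none
      | some (c₁, r₁) =>
        match Circ.parse f r₁ with
        | none => none
        | some (c₂, r₂) => some (.and c₁ c₂, r₂)
    else
      match Circ.parse f r with
      | none => none
      | some (c₁, r₁) =>
        match Circ.parse f r₁ with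
        | none => none
        | some (c₂, r₂) => some (.or c₁ c₂, r₂)

lemma Circ.parse_encode (c : Circ n) : ∀ f r, c.encode.length ≤ f →
    Circ.parse f (c.encode ++ r) = some (c, r) := by
  induction c with
  | input i =>
    rintro (_|f) r h
    · simp [Circ.encode] at h
    · simp [Circ.encode, Circ.parse]
  | not c ih =>
    rintro (_|f) r h
    · simp [Circ.encode] at h
    · simp only [Circ.encode, List.length_cons, add_le_add_iff_right] at h
      simp [Circ.encode, Circ.parse, ih f r h]
  | and c₁ c₂ ih₁ ih₂ =>
    rintro (_|f) r h
    · simp [Circ.encode] at h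
    · simp only [Circ.encode, List.length_cons, List.length_append] at h
      have h₁ : c₁.encode.length ≤ f := by omega
      have h₂ : c₂.encode.length ≤ f := by omega
      simp [Circ.encode, Circ.parse, List.append_assoc, ih₁ f (c₂.encode ++ r) h₁,
        ih₂ f r h₂]
  | or c₁ c₂ ih₁ ih₂ =>
    rintro (_|f) r h
    · simp [Circ.encode] at h
    · simp only [Circ.encode, List.length_cons, List.length_append] at h
      have h₁ : c₁.encode.length ≤ f := by omega
      have h₂ : c₂.encode.length ≤ f := by omega
      simp [Circ.encode, Circ.parse, List.append_assoc, ih₁ f (c₂.encode ++ r) h₁,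
        ih₂ f r h₂]

lemma Circ.encode_inj {c₁ c₂ : Circ n} (h : c₁.encode = c₂.encode) : c₁ = c₂ := by
  have h₁ := Circ.parse_encode c₁ c₁.encode.length [] le_rfl
  rw [h] at h₁
  have h₂ := Circ.parse_encode c₂ c₂.encode.length [] le_rfl
  rw [h₁] at h₂
  simpa using h₂

/-- Padding a list of length ≤ L into a function `Fin L → Option α`. -/
def padList {α : Type*} (L : ℕ) (l : List α) : Fin L → Option α := fun i => l[(i : ℕ)]?

lemma padList_inj {α : Type*} {L : ℕ} {l₁ l₂ : List α} (h₁ : l₁.length ≤ L)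
    (h₂ : l₂.length ≤ L) (h : padList L l₁ = padList L l₂) : l₁ = l₂ := by
  apply List.ext_getElem?
  intro i
  by_cases hi : i < L
  · exact congrFun h ⟨i, hi⟩
  · rw [List.getElem?_eq_none (by omega), List.getElem?_eq_none (by omega)]

/-- The counting argument: if there are more functions on `t` bits than circuits of
size `≤ s`, then some `t`-bit function (lifted to `n` bits) escapes all of them. -/
lemma exists_hard (n s t : ℕ) (ht : t ≤ n)
    (hcard : (n + 4) ^ (2 * s + 2) < 2 ^ 2 ^ t) :
    ∃ g : (Fin t → Bool) → Bool, ∀ c : Circ n, c.size ≤ s →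
      ∃ x : Fin n → Bool, c.eval x ≠ g (fun i => x (Fin.castLE ht i)) := by
  by_contra hcon
  push_neg at hcon
  -- hcon : ∀ g, ∃ c, size ≤ s ∧ ∀ x, eval = lift g
  have key : ∀ g : (Fin t → Bool) → Bool, ∃ c : Circ n, c.size ≤ s ∧
      ∀ x : Fin n → Bool, c.eval x = g (fun i => x (Fin.castLE ht i)) := by
    intro g
    obtain ⟨c, hc, hx⟩ := hcon g
    exact ⟨c, hc, hx⟩
  classical
  set Φ : ((Fin t → Bool) → Bool) → (Fin (2 * s + 2) → Option (CSym n)) :=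
    fun g => padList _ (key g).choose.encode with hΦ
  have hΦinj : Function.Injective Φ := by
    intro g₁ g₂ hgg
    obtain ⟨hs₁, he₁⟩ := (key g₁).choose_spec
    obtain ⟨hs₂, he₂⟩ := (key g₂).choose_spec
    have hlen₁ : (key g₁).choose.encode.length ≤ 2 * s + 2 := by
      have := Circ.encode_length (key g₁).choose; omega
    have hlen₂ : (key g₂).choose.encode.length ≤ 2 * s + 2 := by
      have := Circ.encode_length (key g₂).choose; omega
    have : (key g₁).choose = (key g₂).choose :=
      Circ.encode_inj (padList_inj hlen₁ hlen₂ hgg)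
    funext a
    have hx := he₂ (fun j : Fin n => if hj : (j : ℕ) < t then a ⟨j, hj⟩ else false)
    rw [← this, he₁] at hx
    have ha : (fun i : Fin t =>
        (fun j : Fin n => if hj : (j : ℕ) < t then a ⟨j, hj⟩ else false)
          (Fin.castLE ht i)) = a := by
      funext i
      simp [Fin.castLE]
    rwa [ha] at hx
  have := Fintype.card_le_of_injective Φ hΦinj
  simp only [Fintype.card_fun, Fintype.card_option, Fintype.card_sum, Fintype.card_fin,
    Fintype.card_bool] at this
  have h34 : n + 3 + 1 = n + 4 := rfl
  rw [h34] at this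
  omega

end Counting

/-! ### DNF circuits -/

section DNF

variable {n : ℕ}

lemma ACCirc.eval_andn (x : Fin n → Bool) (cs : List (ACCirc n)) :
    (ACCirc.andn cs).eval x = cs.all (fun c => c.eval x) := by
  rw [ACCirc.eval]
  rcases h : cs.all (fun c => c.eval x) with _|_
  · rw [List.all_eq_false] at h ⊢
    obtain ⟨c, hc, hce⟩ := h
    exact ⟨⟨c, hc⟩, List.mem_attach _ _, hce⟩
  · rw [List.all_eq_true] at h ⊢
    exact fun c _ => h c.1 c.2

lemma ACCirc.eval_orn (x : Fin n → Bool) (cs : List (ACCirc n)) :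
    (ACCirc.orn cs).eval x = cs.any (fun c => c.eval x) := by
  rw [ACCirc.eval]
  rcases h : cs.any (fun c => c.eval x) with _|_
  · rw [List.any_eq_false] at h ⊢
    exact fun c _ => h c.1 c.2
  · rw [List.any_eq_true] at h ⊢
    obtain ⟨c, hc, hce⟩ := h
    exact ⟨⟨c, hc⟩, List.mem_attach _ _, hce⟩

lemma ACCirc.size_andn (cs : List (ACCirc n)) :
    (ACCirc.andn cs).size = (cs.map ACCirc.size).sum + 1 := by
  rw [ACCirc.size]
  congr 1
  rw [show (fun c : {x // x ∈ cs} => c.1.size) = ACCirc.size ∘ Subtype.val from rfl,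
    ← List.map_map, List.attach_map_subtype_val]

lemma ACCirc.size_orn (cs : List (ACCirc n)) :
    (ACCirc.orn cs).size = (cs.map ACCirc.size).sum + 1 := by
  rw [ACCirc.size]
  congr 1
  rw [show (fun c : {x // x ∈ cs} => c.1.size) = ACCirc.size ∘ Subtype.val from rfl,
    ← List.map_map, List.attach_map_subtype_val]

lemma ACCirc.depth_andn (cs : List (ACCirc n)) :
    (ACCirc.andn cs).depth = (cs.map ACCirc.depth).foldr max 0 + 1 := by
  rw [ACCirc.depth]
  congr 1
  rw [show (fun c : {x // x ∈ cs} => c.1.depth) = ACCirc.depth ∘ Subtype.val from rfl,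
    ← List.map_map, List.attach_map_subtype_val]

lemma ACCirc.depth_orn (cs : List (ACCirc n)) :
    (ACCirc.orn cs).depth = (cs.map ACCirc.depth).foldr max 0 + 1 := by
  rw [ACCirc.depth]
  congr 1
  rw [show (fun c : {x // x ∈ cs} => c.1.depth) = ACCirc.depth ∘ Subtype.val from rfl,
    ← List.map_map, List.attach_map_subtype_val]

lemma foldr_max_le {l : List ℕ} {m : ℕ} (h : ∀ a ∈ l, a ≤ m) : l.foldr max 0 ≤ m := by
  induction l with
  | nil => simp
  | cons a l ih =>
    simp only [List.foldr_cons, max_le_iff]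
    exact ⟨h a List.mem_cons_self, ih fun b hb => h b (List.mem_cons_of_mem a hb)⟩

/-- A literal on variable `j`. -/
def lit (j : Fin n) (b : Bool) : ACCirc n := if b then .input j else .not (.input j)

lemma lit_eval (x : Fin n → Bool) (j : Fin n) (b : Bool) :
    (lit j b).eval x = (x j == b) := by
  cases b <;> simp [lit, ACCirc.eval]

lemma lit_size (j : Fin n) (b : Bool) : (lit j b).size ≤ 1 := by
  cases b <;> simp [lit, ACCirc.size]

lemma lit_depth (j : Fin n) (b : Bool) : (lit j b).depth ≤ 1 := by
  cases b <;> simp [lit, ACCirc.depth]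

variable {t : ℕ}

/-- The minterm checking whether the first `t` input bits equal `a`. -/
def minterm (ht : t ≤ n) (a : Fin t → Bool) : ACCirc n :=
  .andn (List.ofFn fun i : Fin t => lit (Fin.castLE ht i) (a i))

lemma minterm_eval (ht : t ≤ n) (a : Fin t → Bool) (x : Fin n → Bool) :
    (minterm ht a).eval x = ((fun i => x (Fin.castLE ht i)) == a) := by
  rw [minterm, ACCirc.eval_andn]
  rcases eq_or_ne (fun i => x (Fin.castLE ht i)) a with h | h
  · simp only [h, beq_self_eq_true]
    rw [List.all_eq_true]
    simp only [List.mem_ofFn]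
    rintro c ⟨i, rfl⟩
    rw [lit_eval]
    have := congrFun h i
    simp [this]
  · simp only [beq_eq_false_iff_ne.mpr h]
    rw [List.all_eq_false]
    have : ∃ i, x (Fin.castLE ht i) ≠ a i := by
      by_contra hcon
      push_neg at hcon
      exact h (funext hcon)
    obtain ⟨i, hi⟩ := this
    refine ⟨lit (Fin.castLE ht i) (a i), List.mem_ofFn.2 ⟨i, rfl⟩, ?_⟩
    rw [lit_eval]
    simpa using hi

lemma minterm_size (ht : t ≤ n) (a : Fin t → Bool) : (minterm ht a).size ≤ t + 1 := by
  rw [minterm, ACCirc.size_andn]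
  have : ((List.ofFn fun i : Fin t => lit (Fin.castLE ht i) (a i)).map ACCirc.size).sum
      ≤ ((List.ofFn fun i : Fin t => lit (Fin.castLE ht i) (a i)).map ACCirc.size).length * 1 := by
    apply List.sum_le_card_nsmul
    simp only [List.mem_map, List.mem_ofFn]
    rintro b ⟨c, ⟨i, rfl⟩, rfl⟩
    exact lit_size _ _
  simp only [List.length_map, List.length_ofFn, mul_one] at this
  omega

lemma minterm_depth (ht : t ≤ n) (a : Fin t → Bool) : (minterm ht a).depth ≤ 2 := by
  rw [minterm, ACCirc.depth_andn]
  have : ((List.ofFn fun i : Fin t => lit (Fin.castLE ht i) (a i)).map ACCirc.depth).foldr max 0 ≤ 1 := by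
    apply foldr_max_le
    simp only [List.mem_map, List.mem_ofFn]
    rintro b ⟨c, ⟨i, rfl⟩, rfl⟩
    exact lit_depth _ _
  omega

open Classical in
/-- DNF circuit computing `g` on the first `t` bits. -/
noncomputable def dnf (ht : t ≤ n) (g : (Fin t → Bool) → Bool) : ACCirc n :=
  .orn ((Finset.univ.filter fun a : Fin t → Bool => g a = true).toList.map (minterm ht))

lemma dnf_eval (ht : t ≤ n) (g : (Fin t → Bool) → Bool) (x : Fin n → Bool) :
    (dnf ht g).eval x = g (fun i => x (Fin.castLE ht i)) := by
  classical
  rw [dnf, ACCirc.eval_orn]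
  rcases hg : g (fun i => x (Fin.castLE ht i)) with _ | _
  · rw [List.any_eq_false]
    simp only [List.mem_map, Finset.mem_toList, Finset.mem_filter, Finset.mem_univ, true_and]
    rintro c ⟨a, ha, rfl⟩
    rw [minterm_eval]
    intro hbeq
    rw [beq_iff_eq] at hbeq
    rw [hbeq, ha] at hg
    exact Bool.false_ne_true hg.symm
  · rw [List.any_eq_true]
    refine ⟨minterm ht (fun i => x (Fin.castLE ht i)), ?_, ?_⟩
    · simp only [List.mem_map, Finset.mem_toList, Finset.mem_filter, Finset.mem_univ, true_and]
      exact ⟨_, hg, rfl⟩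
    · rw [minterm_eval]; simp
  
lemma dnf_size (ht : t ≤ n) (g : (Fin t → Bool) → Bool) :
    (dnf ht g).size ≤ 2 ^ t * (t + 1) + 1 := by
  classical
  rw [dnf, ACCirc.size_orn]
  have hlen : ((Finset.univ.filter fun a : Fin t → Bool => g a = true).toList.map (minterm ht)).length ≤ 2 ^ t := by
    simp only [List.length_map, Finset.length_toList]
    calc (Finset.univ.filter fun a : Fin t → Bool => g a = true).card
        ≤ (Finset.univ : Finset (Fin t → Bool)).card := Finset.card_filter_le _ _
      _ = 2 ^ t := by simp [Fintype.card_fun]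
  have hsum : (((Finset.univ.filter fun a : Fin t → Bool => g a = true).toList.map (minterm ht)).map ACCirc.size).sum
      ≤ (((Finset.univ.filter fun a : Fin t → Bool => g a = true).toList.map (minterm ht)).map ACCirc.size).length * (t + 1) := by
    apply List.sum_le_card_nsmul
    simp only [List.mem_map]
    rintro b ⟨c, ⟨a, ha, rfl⟩, rfl⟩
    exact minterm_size _ _
  simp only [List.length_map, Finset.length_toList] at hsum hlen
  have := Nat.mul_le_mul_right (t + 1) hlen
  omega

lemma dnf_depth (ht : t ≤ n) (g : (Fin t → Bool) → Bool) : (dnf ht g).depth ≤ 3 := by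
  classical
  rw [dnf, ACCirc.depth_orn]
  have : (((Finset.univ.filter fun a : Fin t → Bool => g a = true).toList.map (minterm ht)).map ACCirc.depth).foldr max 0 ≤ 2 := by
    apply foldr_max_le
    simp only [List.mem_map]
    rintro b ⟨c, ⟨a, ha, rfl⟩, rfl⟩
    exact minterm_depth _ _
  omega

end DNF

/-! ### The diagonal language -/

section Diagonal

/-- Number of relevant input bits at length `n`. -/
def tpar (k n : ℕ) : ℕ := (2 * k + 4) * Nat.clog 2 n

/-- At length `n` there is a hard function on the first `tpar k n` bits. -/
def HardAt (k n : ℕ) : Prop :=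
  ∃ h : tpar k n ≤ n, ∃ g : (Fin (tpar k n) → Bool) → Bool,
    ∀ c : Circ n, c.size ≤ n ^ (k + 1) + n →
      ∃ x : Fin n → Bool, c.eval x ≠ g (fun i => x (Fin.castLE h i))

open Classical in
/-- The diagonal language. -/
noncomputable def Lhard (k : ℕ) : Lang := fun n x =>
  if h : HardAt k n then
    h.choose_spec.choose (fun i => x (Fin.castLE h.choose i))
  else false

lemma two_mul_le_two_pow {j : ℕ} (hj : 1 ≤ j) : 2 * j ≤ 2 ^ j := by
  induction j with
  | zero => omega
  | succ j ih =>
    rcases Nat.eq_or_lt_of_le hj with h | h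
    · simp [← h]
    · have := ih (by omega)
      have : 2 ^ j ≥ 2 := by
        calc 2 ^ j ≥ 2 ^ 1 := Nat.pow_le_pow_right (by norm_num) (by omega)
          _ = 2 := by norm_num
      rw [pow_succ]
      omega

lemma exists_pow_ge (a b : ℕ) : ∃ m : ℕ, b ≤ 2 ^ m ∧ a * m ≤ 2 ^ m := by
  set j := a + b + 2 with hj
  refine ⟨2 ^ j, ?_, ?_⟩
  · have h1 : b ≤ j := by omega
    have h2 : j ≤ 2 ^ j := Nat.le_of_lt (Nat.lt_two_pow_self : j < 2 ^ j)
    have h3 : 2 ^ j ≤ 2 ^ 2 ^ j := Nat.pow_le_pow_right (by norm_num) h2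
    omega
  · have h1 : a * 2 ^ j ≤ j * 2 ^ j := Nat.mul_le_mul_right _ (by omega)
    have h2 : j * 2 ^ j ≤ 2 ^ j * 2 ^ j :=
      Nat.mul_le_mul_right _ (Nat.le_of_lt (Nat.lt_two_pow_self : j < 2 ^ j))
    have h3 : (2:ℕ) ^ j * 2 ^ j = 2 ^ (2 * j) := by rw [← pow_add]; ring_nf
    have h4 : 2 * j ≤ 2 ^ j := two_mul_le_two_pow (by omega)
    calc a * 2 ^ j ≤ 2 ^ (2 * j) := by omega
      _ ≤ 2 ^ 2 ^ j := Nat.pow_le_pow_right (by norm_num) h4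

/-- The key arithmetic bound. -/
lemma arith_bound {k n : ℕ} (hk : 1 ≤ k) (hn : 4 ≤ n) :
    (n + 4) ^ (2 * (n ^ (k + 1) + n) + 2) < 2 ^ n ^ (2 * k + 4) := by
  set A := n ^ (k + 1) with hA
  have hA2 : n ^ 2 ≤ A := Nat.pow_le_pow_right (by omega) (by omega)
  have hn2 : n ≤ A := by
    calc n = n ^ 1 := (pow_one n).symm
      _ ≤ A := Nat.pow_le_pow_right (by omega) (by omega)
  have hexp : (n + 4) * (2 * (A + n) + 2) < n ^ (2 * k + 4) := by
    have hr : n ^ (2 * k + 4) = A * A * n ^ 2 := by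
      rw [hA, ← pow_add, ← pow_add]
      congr 1
      ring
    rw [hr]
    have h1 : (n + 4) * (2 * (A + n) + 2) ≤ 2 * n * (6 * A) := by
      have ha : n + 4 ≤ 2 * n := by omega
      have hb : 2 * (A + n) + 2 ≤ 6 * A := by omega
      exact Nat.mul_le_mul ha hb
    have h6 : 0 < A * n := Nat.mul_pos (by omega) (by omega)
    have h8 : (64:ℕ) ≤ n ^ 3 := by
      calc (64:ℕ) = 4 ^ 3 := by norm_num
        _ ≤ n ^ 3 := Nat.pow_le_pow_left hn 3
    calc (n + 4) * (2 * (A + n) + 2) ≤ 2 * n * (6 * A) := h1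
      _ = 12 * (A * n) := by ring
      _ < 64 * (A * n) := by nlinarith [h6]
      _ ≤ n ^ 3 * (A * n) := Nat.mul_le_mul h8 le_rfl
      _ = A * n ^ 2 * n ^ 2 := by ring
      _ ≤ A * A * n ^ 2 := Nat.mul_le_mul (Nat.mul_le_mul le_rfl hA2) le_rfl
  calc (n + 4) ^ (2 * (A + n) + 2) ≤ (2 ^ (n + 4)) ^ (2 * (A + n) + 2) :=
        Nat.pow_le_pow_left (Nat.le_of_lt Nat.lt_two_pow_self) _
    _ = 2 ^ ((n + 4) * (2 * (A + n) + 2)) := by rw [← pow_mul]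
    _ < 2 ^ n ^ (2 * k + 4) := Nat.pow_lt_pow_right (by norm_num) hexp

/-- At `n = 2^m` with suitable `m`, `HardAt` holds. -/
lemma hardAt_pow (k m : ℕ) (hk : 1 ≤ k) (h4 : 4 ≤ 2 ^ m)
    (hm : (2 * k + 4) * m ≤ 2 ^ m) : HardAt k (2 ^ m) := by
  set n := 2 ^ m with hn
  have htp : tpar k n = (2 * k + 4) * m := by
    rw [tpar, hn, Nat.clog_pow 2 m (by norm_num)]
  have ht : tpar k n ≤ n := by rw [htp]; exact hm
  refine ⟨ht, ?_⟩
  apply exists_hard n (n ^ (k + 1) + n) (tpar k n) ht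
  -- (n+4)^(2s+2) < 2^(2^t)
  have h1 : n ^ (2 * k + 4) ≤ 2 ^ tpar k n := by
    have : n ≤ 2 ^ Nat.clog 2 n := Nat.le_pow_clog (by norm_num) n
    calc n ^ (2 * k + 4) ≤ (2 ^ Nat.clog 2 n) ^ (2 * k + 4) :=
          Nat.pow_le_pow_left this _
      _ = 2 ^ tpar k n := by rw [← pow_mul, tpar]; ring_nf
  calc (n + 4) ^ (2 * (n ^ (k + 1) + n) + 2) < 2 ^ n ^ (2 * k + 4) :=
        arith_bound hk h4
    _ ≤ 2 ^ 2 ^ tpar k n := Nat.pow_le_pow_right (by norm_num) h1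

end Diagonal

/-- For every positive integer `k`, there is a language in `AC⁰`
that is not in `SIZE[n^k]`. -/
theorem AC0_not_subset_SIZE_poly (k : ℕ) (hk : 1 ≤ k) :
    ∃ L : Lang, InAC0 L ∧ ¬ InSIZE (fun n => n ^ k) L := by
  classical
  refine ⟨Lhard k, ?_, ?_⟩
  · -- InAC0
    refine ⟨3, 2 ^ (2 * k + 5) + 2, 2 * k + 5, ?_⟩
    intro n
    by_cases h : HardAt k n
    · refine ⟨dnf h.choose h.choose_spec.choose, dnf_depth _ _, ?_, ?_⟩
      · -- size bound
        have hs := dnf_size h.choose h.choose_spec.choose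
        refine hs.trans ?_
        rcases Nat.eq_zero_or_pos n with rfl | hn
        · have ht0 : tpar k 0 = 0 := by simp [tpar]
          rw [ht0]
          have h0 : (0:ℕ) ^ (2 * k + 5) = 0 := Nat.zero_pow (by omega)
          rw [h0]
          have hp : 1 ≤ 2 ^ (2 * k + 5) := Nat.one_le_two_pow
          omega
        · -- n ≥ 1 : 2^(clog 2 n) ≤ 2 * n
          have hclog : 2 ^ Nat.clog 2 n ≤ 2 * n := by
            rcases Nat.lt_or_ge n 2 with hn2 | hn2
            · have hn1 : n = 1 := by omega
              subst hn1
              simp [Nat.clog_one_right]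
            · have := Nat.pow_pred_clog_lt_self (by norm_num : 1 < 2) hn2
              rw [Nat.pred_eq_sub_one] at this
              have hc1 : 0 < Nat.clog 2 n := Nat.clog_pos (by norm_num) hn2
              calc 2 ^ Nat.clog 2 n = 2 * 2 ^ (Nat.clog 2 n - 1) := by
                    rw [← pow_succ']
                    congr 1
                    omega
                _ ≤ 2 * n := by omega
          have h2t : 2 ^ tpar k n ≤ 2 ^ (2 * k + 4) * n ^ (2 * k + 4) := by
            calc 2 ^ tpar k n = (2 ^ Nat.clog 2 n) ^ (2 * k + 4) := by
                  rw [tpar, ← pow_mul]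
                  ring_nf
              _ ≤ (2 * n) ^ (2 * k + 4) := Nat.pow_le_pow_left hclog _
              _ = 2 ^ (2 * k + 4) * n ^ (2 * k + 4) := by rw [mul_pow]
          have htn : tpar k n ≤ n := h.choose
          calc 2 ^ tpar k n * (tpar k n + 1) + 1
              ≤ 2 ^ (2 * k + 4) * n ^ (2 * k + 4) * (2 * n) + 1 := by
                have := Nat.mul_le_mul h2t (show tpar k n + 1 ≤ 2 * n by omega)
                omega
            _ = 2 ^ (2 * k + 5) * n ^ (2 * k + 5) + 1 := by
                rw [show 2 * k + 5 = (2 * k + 4) + 1 by omega, pow_succ, pow_succ]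
                ring
            _ ≤ (2 ^ (2 * k + 5) + 2) * n ^ (2 * k + 5) + (2 ^ (2 * k + 5) + 2) := by
                have h3 : 2 ^ (2 * k + 5) * n ^ (2 * k + 5)
                    ≤ (2 ^ (2 * k + 5) + 2) * n ^ (2 * k + 5) :=
                  Nat.mul_le_mul_right _ (by omega)
                have hp : 1 ≤ 2 ^ (2 * k + 5) := Nat.one_le_two_pow
                omega
      · -- eval
        intro x
        rw [dnf_eval]
        simp only [Lhard, dif_pos h]
    · refine ⟨.orn [], ?_, ?_, ?_⟩
      · rw [ACCirc.depth_orn]; simp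
      · rw [ACCirc.size_orn]
        simp only [List.map_nil, List.sum_nil, zero_add]
        have hp : 1 ≤ 2 ^ (2 * k + 5) := Nat.one_le_two_pow
        omega
      · intro x
        rw [ACCirc.eval_orn]
        simp [Lhard, dif_neg h]
  · -- not in SIZE
    rintro ⟨C, hC⟩
    obtain ⟨m, hb, hm⟩ := exists_pow_ge (2 * k + 4) (C + 4)
    set n := 2 ^ m with hn
    have h : HardAt k n := hardAt_pow k m hk (by omega) hm
    obtain ⟨c, hcsize, hceval⟩ := hC n
    have hsize' : c.size ≤ n ^ (k + 1) + n := by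
      have hCn : C ≤ n := by omega
      calc c.size ≤ C * n ^ k + C := hcsize
        _ ≤ n * n ^ k + n := Nat.add_le_add (Nat.mul_le_mul_right _ hCn) hCn
        _ = n ^ (k + 1) + n := by rw [pow_succ]; ring
    obtain ⟨x, hx⟩ := h.choose_spec.choose_spec c hsize'
    apply hx
    rw [hceval]
    simp only [Lhard, dif_pos h]
end

section
/- Orthogonality of the interleaved sign-binary encodings used for hard attention: for s ≥ 1 and indices i, j ∈ [2^s − 1], let q_i be the length-2s vector interleaving sbin_s(i) with the all-ones vector, and k_j = B_s · (interleaving of sbin_s(j) with the all-(−1) vector), where sbin_s(x) ∈ {−1,1}^s is the signed binary encoding of x and B_s = 2^s − 2^{−s}. Then the iteratively rounded inner product ⟨q_i, k_j⟩_s (computed by rounding to 𝔽_{0,s} after each partial sum) equals 0 if i = j and −B_s if i ≠ j; hence round(exp(⟨q_i, k_j⟩_s)) = 1[i = j]. -/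
/-- The fixed-point numbers with `2s`-bit significand and no exponent bits. -/
def Fs (s : ℕ) : Set ℝ :=
  {x | ∃ (c : ℝ) (k : ℕ), (c = 1 ∨ c = -1) ∧ k < 2 ^ (2 * s) ∧
    x = c * k * (2 : ℝ) ^ (-(s : ℤ))}

/-- `B_s = 2^s - 2^{-s}`, the largest element of `F_{0,s}`. -/
noncomputable def Bs (s : ℕ) : ℝ := 2 ^ s - (2 : ℝ) ^ (-(s : ℤ))

/-- Iterated sum with rounding after each binary addition, left to right. -/
def itSum (rnd : ℝ → ℝ) : List ℝ → ℝ
  | [] => 0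
  | a :: rest => rest.foldl (fun acc b => rnd (acc + b)) a

/-- Iteratively rounded inner product: each coordinate product is rounded,
then the products are summed with rounding after each addition. -/
def itInner (rnd : ℝ → ℝ) (x y : List ℝ) : ℝ :=
  itSum rnd ((x.zip y).map fun p => rnd (p.1 * p.2))

/-- The `j`-th coordinate of the signed binary encoding of `i`. -/
def sb (i j : ℕ) : ℝ := if Nat.testBit i j then 1 else -1

/-- `q_i`: the signed binary encoding of `i` interleaved with all-ones. -/
def qvec (s i : ℕ) : List ℝ := (List.range s).flatMap fun j => [sb i j, 1]

/-- `k_j`: `B_s` times the signed binary encoding of `j` interleaved with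
all-(−1)'s. -/
noncomputable def kvec (s j : ℕ) : List ℝ :=
  (List.range s).flatMap fun l => [Bs s * sb j l, -(Bs s)]

/-! ### Auxiliary lemmas -/

lemma two_zpow_neg (s : ℕ) : (2:ℝ) ^ (-(s:ℤ)) = ((2:ℝ)^s)⁻¹ := by
  rw [zpow_neg, zpow_natCast]

lemma two_zpow_pos (s : ℕ) : (0:ℝ) < (2:ℝ)^(-(s:ℤ)) := by positivity

lemma Bs_eq (s : ℕ) : Bs s = ((2:ℝ)^(2*s) - 1) * ((2:ℝ)^s)⁻¹ := by
  have h : (0:ℝ) < 2^s := by positivity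
  rw [Bs, two_zpow_neg, two_mul, pow_add]
  field_simp

lemma Bs_nonneg (s : ℕ) : 0 ≤ Bs s := by
  rw [Bs, two_zpow_neg]
  have h1 : (1:ℝ) ≤ (2:ℝ)^s := one_le_pow₀ (by norm_num)
  have h2 : ((2:ℝ)^s)⁻¹ ≤ 1 := inv_le_one_of_one_le₀ h1
  linarith

lemma zero_mem_Fs (s : ℕ) : (0:ℝ) ∈ Fs s :=
  ⟨1, 0, Or.inl rfl, by positivity, by simp⟩

lemma Bs_mem_Fs (s : ℕ) : Bs s ∈ Fs s := by
  refine ⟨1, 2^(2*s) - 1, Or.inl rfl, by have := Nat.one_le_two_pow (n := 2*s); omega, ?_⟩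
  have h1 : (1:ℕ) ≤ 2^(2*s) := Nat.one_le_two_pow
  rw [Bs_eq, two_zpow_neg, Nat.cast_sub h1]
  push_cast
  ring

lemma neg_mem_Fs {s : ℕ} {x : ℝ} (hx : x ∈ Fs s) : -x ∈ Fs s := by
  obtain ⟨c, k, hc, hk, rfl⟩ := hx
  exact ⟨-c, k, by rcases hc with h|h <;> simp [h], hk, by ring⟩

lemma neg_Bs_mem_Fs (s : ℕ) : -(Bs s) ∈ Fs s := neg_mem_Fs (Bs_mem_Fs s)

lemma one_mem_Fs {s : ℕ} (hs : 1 ≤ s) : (1:ℝ) ∈ Fs s := by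
  refine ⟨1, 2^s, Or.inl rfl, ?_, ?_⟩
  · exact Nat.pow_lt_pow_right (by norm_num) (by omega)
  · rw [two_zpow_neg]
    push_cast
    field_simp

lemma Fs_abs_le {s : ℕ} {x : ℝ} (hx : x ∈ Fs s) : |x| ≤ Bs s := by
  obtain ⟨c, k, hc, hk, rfl⟩ := hx
  have hc1 : |c| = 1 := by rcases hc with h|h <;> simp [h]
  have h1 : (k:ℝ) ≤ 2^(2*s) - 1 := by
    have hk' : k + 1 ≤ 2^(2*s) := hk
    have : ((k:ℝ)) + 1 ≤ 2^(2*s) := by exact_mod_cast hk'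
    linarith
  rw [abs_mul, abs_mul, hc1, one_mul, abs_of_nonneg (by positivity : (0:ℝ) ≤ (k:ℝ)),
    abs_of_pos (two_zpow_pos s), Bs_eq, two_zpow_neg]
  have := two_zpow_pos s
  gcongr

lemma Fs_abs_ge {s : ℕ} {x : ℝ} (hx : x ∈ Fs s) (hne : x ≠ 0) :
    (2:ℝ)^(-(s:ℤ)) ≤ |x| := by
  obtain ⟨c, k, hc, hk, rfl⟩ := hx
  have hk1 : 1 ≤ k := by
    rcases Nat.eq_zero_or_pos k with h|h
    · exfalso; apply hne; simp [h]
    · exact h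
  have hc1 : |c| = 1 := by rcases hc with h|h <;> simp [h]
  rw [abs_mul, abs_mul, hc1, one_mul, abs_of_nonneg (by positivity : (0:ℝ) ≤ (k:ℝ)),
    abs_of_pos (two_zpow_pos s)]
  have h1 : (1:ℝ) ≤ (k:ℝ) := by exact_mod_cast hk1
  nlinarith [two_zpow_pos s]

section rndlem
variable {s : ℕ} {rnd : ℝ → ℝ} (hrnd : IsRound (Fs s) rnd)
include hrnd

lemma rnd_fixed {x : ℝ} (hx : x ∈ Fs s) : rnd x = x := by
  obtain ⟨_, hmin, _⟩ := hrnd x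
  have h := hmin x hx
  simp only [sub_self, abs_zero] at h
  have h2 : |x - rnd x| = 0 := le_antisymm h (abs_nonneg _)
  have := abs_eq_zero.mp h2
  linarith

lemma rnd_sat {x : ℝ} (hx : x ≤ -(Bs s)) : rnd x = -(Bs s) := by
  obtain ⟨hmem, hmin, _⟩ := hrnd x
  have h1 := hmin (-(Bs s)) (neg_Bs_mem_Fs s)
  have h2 : -(Bs s) ≤ rnd x := neg_le_of_abs_le (Fs_abs_le hmem)
  have h3 : |x - rnd x| = rnd x - x := by
    rw [abs_sub_comm, abs_of_nonneg]; linarith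
  have h4 : |x - (-(Bs s))| = -(Bs s) - x := by
    rw [abs_of_nonpos] <;> ring_nf <;> linarith
  rw [h3, h4] at h1
  linarith

lemma rnd_small {x : ℝ} (h0 : 0 ≤ x) (hx : x < (2:ℝ)^(-(s:ℤ))/2) : rnd x = 0 := by
  obtain ⟨hmem, hmin, _⟩ := hrnd x
  by_contra hne
  have hge := Fs_abs_ge hmem hne
  have h1 := hmin 0 (zero_mem_Fs s)
  rw [sub_zero, abs_of_nonneg h0] at h1
  have h2 : |rnd x| - |x| ≤ |x - rnd x| := by
    rw [abs_sub_comm]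
    linarith [abs_sub_abs_le_abs_sub (rnd x) x]
  rw [abs_of_nonneg h0] at h2
  linarith

end rndlem

/-! ### List lemmas -/

lemma itSum_append (rnd : ℝ → ℝ) (l m : List ℝ) (hl : l ≠ []) :
    itSum rnd (l ++ m) = m.foldl (fun acc b => rnd (acc + b)) (itSum rnd l) := by
  cases l with
  | nil => simp at hl
  | cons a rest => simp [itSum, List.foldl_append]

lemma zip_interleave (f g f' g' : ℕ → ℝ) (n : ℕ) :
    (((List.range n).flatMap fun l => [f l, g l]).zip
      ((List.range n).flatMap fun l => [f' l, g' l])) =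
    (List.range n).flatMap fun l => [(f l, f' l), (g l, g' l)] := by
  induction n with
  | zero => simp
  | succ n ih =>
    rw [List.range_succ]
    simp only [List.flatMap_append, List.flatMap_cons, List.flatMap_nil, List.append_nil]
    rw [List.zip_append (by simp only [List.length_flatMap]; congr 1)]
    rw [ih]
    simp

lemma interleave_ne_nil (f g : ℕ → ℝ) (n : ℕ) (hn : 1 ≤ n) :
    ((List.range n).flatMap fun l => [f l, g l]) ≠ [] := by
  intro h
  have h2 := congrArg List.length h
  rw [List.length_flatMap] at h2
  simp [Function.comp_def] at h2
  omega

/-! ### Key induction -/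

lemma key_itSum (s i j : ℕ) (rnd : ℝ → ℝ) (hrnd : IsRound (Fs s) rnd) :
    ∀ n, 1 ≤ n →
    itSum rnd ((List.range n).flatMap fun l =>
      [rnd (sb i l * (Bs s * sb j l)), rnd (1 * -(Bs s))]) =
    if ∀ l < n, Nat.testBit i l = Nat.testBit j l then 0 else -(Bs s) := by
  have hBs := Bs_nonneg s
  have hnegmem := neg_Bs_mem_Fs s
  have hprod : ∀ l, rnd (sb i l * (Bs s * sb j l)) =
      if Nat.testBit i l = Nat.testBit j l then Bs s else -(Bs s) := by
    intro l
    unfold sb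
    by_cases h1 : Nat.testBit i l <;> by_cases h2 : Nat.testBit j l <;>
        simp only [h1, h2, if_true, if_false, eq_self_iff_true, Bool.true_eq_false,
          Bool.false_eq_true] <;>
        ring_nf
    · exact rnd_fixed hrnd (Bs_mem_Fs s)
    · exact rnd_fixed hrnd hnegmem
    · exact rnd_fixed hrnd hnegmem
    · exact rnd_fixed hrnd (Bs_mem_Fs s)
  have hq : rnd (1 * -(Bs s)) = -(Bs s) := by
    rw [one_mul]; exact rnd_fixed hrnd hnegmem
  have hzero := rnd_fixed hrnd (zero_mem_Fs s)
  have hnegfix := rnd_fixed hrnd hnegmem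
  have hsat : ∀ x : ℝ, x ≤ -(Bs s) → rnd x = -(Bs s) := fun x hx => rnd_sat hrnd hx
  intro n hn
  induction n with
  | zero => omega
  | succ m ih =>
    rcases Nat.eq_zero_or_pos m with hm | hm
    · subst hm
      rw [show List.range 1 = [0] from rfl]
      simp only [List.flatMap_cons, List.flatMap_nil, List.append_nil]
      show rnd (rnd (sb i 0 * (Bs s * sb j 0)) + rnd (1 * -(Bs s))) = _
      rw [hprod 0, hq]
      by_cases hb : Nat.testBit i 0 = Nat.testBit j 0
      · rw [if_pos hb, if_pos (by intro l hl; interval_cases l; exact hb)]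
        rw [add_neg_cancel, hzero]
      · rw [if_neg hb, if_neg (by push_neg; exact ⟨0, by omega, hb⟩)]
        rw [hsat _ (by linarith)]
    · have ihm := ih hm
      rw [List.range_succ, List.flatMap_append, List.flatMap_cons, List.flatMap_nil,
        List.append_nil, itSum_append _ _ _
          (interleave_ne_nil _ _ m hm), ihm]
      show rnd (rnd (_ + rnd (sb i m * (Bs s * sb j m))) + rnd (1 * -(Bs s))) = _
      rw [hprod m, hq]
      have hcond : (∀ l < m + 1, Nat.testBit i l = Nat.testBit j l) ↔
          ((∀ l < m, Nat.testBit i l = Nat.testBit j l) ∧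
            Nat.testBit i m = Nat.testBit j m) := by
        constructor
        · exact fun h => ⟨fun l hl => h l (by omega), h m (by omega)⟩
        · rintro ⟨h1, h2⟩ l hl
          rcases Nat.lt_or_ge l m with h | h
          · exact h1 l h
          · have : l = m := by omega
            subst this; exact h2
      by_cases hC : ∀ l < m, Nat.testBit i l = Nat.testBit j l
      · rw [if_pos hC]
        by_cases hb : Nat.testBit i m = Nat.testBit j m
        · rw [if_pos hb, if_pos (hcond.mpr ⟨hC, hb⟩)]
          rw [zero_add, rnd_fixed hrnd (Bs_mem_Fs s), add_neg_cancel, hzero]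
        · rw [if_neg hb, if_neg (fun h => hb (hcond.mp h).2)]
          rw [zero_add, hnegfix, hsat _ (by linarith)]
      · rw [if_neg hC, if_neg (fun h => hC (hcond.mp h).1)]
        by_cases hb : Nat.testBit i m = Nat.testBit j m
        · rw [if_pos hb, neg_add_cancel, hzero, zero_add, hnegfix]
        · rw [if_neg hb, hsat (-(Bs s) + -(Bs s)) (by linarith),
            hsat (-(Bs s) + -(Bs s)) (by linarith)]

/-- For `s ≥ 1` and `i, j ∈ [2^s − 1]`, the iteratively rounded
inner product `⟨q_i, k_j⟩_s` equals `0` if `i = j` and `−B_s` if `i ≠ j`; hence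
`round(exp(⟨q_i, k_j⟩_s)) = 1[i = j]`. -/
theorem hard_attention_orthogonality (s i j : ℕ) (hs : 1 ≤ s)
    (hi : 1 ≤ i ∧ i ≤ 2 ^ s - 1) (hj : 1 ≤ j ∧ j ≤ 2 ^ s - 1)
    (rnd : ℝ → ℝ) (hrnd : IsRound (Fs s) rnd) :
    itInner rnd (qvec s i) (kvec s j) = (if i = j then 0 else -(Bs s)) ∧
      rnd (Real.exp (itInner rnd (qvec s i) (kvec s j))) =
        (if i = j then 1 else 0) := by
  have h2s : (1:ℕ) ≤ 2^s := Nat.one_le_two_pow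
  have hlti : i < 2^s := by omega
  have hltj : j < 2^s := by omega
  have hiff : (∀ l < s, Nat.testBit i l = Nat.testBit j l) ↔ i = j := by
    constructor
    · intro h
      apply Nat.eq_of_testBit_eq
      intro l
      rcases Nat.lt_or_ge l s with hl | hl
      · exact h l hl
      · rw [Nat.testBit_lt_two_pow (lt_of_lt_of_le hlti (Nat.pow_le_pow_right (by norm_num) hl)),
          Nat.testBit_lt_two_pow (lt_of_lt_of_le hltj (Nat.pow_le_pow_right (by norm_num) hl))]
    · rintro rfl l _
      rfl
  have hmain : itInner rnd (qvec s i) (kvec s j) = if i = j then 0 else -(Bs s) := by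
    unfold itInner qvec kvec
    rw [zip_interleave (fun l => sb i l) (fun _ => (1:ℝ)) (fun l => Bs s * sb j l)
      (fun _ => -(Bs s)) s]
    rw [List.map_flatMap]
    simp only [List.map_cons, List.map_nil]
    rw [key_itSum s i j rnd hrnd s hs]
    by_cases h : i = j
    · rw [if_pos (hiff.mpr h), if_pos h]
    · rw [if_neg (fun hc => h (hiff.mp hc)), if_neg h]
  refine ⟨hmain, ?_⟩
  rw [hmain]
  by_cases h : i = j
  · rw [if_pos h, if_pos h, Real.exp_zero]
    exact rnd_fixed hrnd (one_mem_Fs hs)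
  · rw [if_neg h, if_neg h]
    apply rnd_small hrnd (Real.exp_nonneg _)
    have hlog := Real.log_two_lt_d9
    have hlogpos := Real.log_pos (by norm_num : (1:ℝ) < 2)
    have hpow : ((s:ℝ) + 1) ≤ 2^s := by
      have := @Nat.lt_two_pow_self s
      have h' : s + 1 ≤ 2^s := this
      exact_mod_cast h'
    have h22 : (2:ℝ) ≤ 2^s := by
      calc (2:ℝ) = 2^1 := by norm_num
      _ ≤ 2^s := by
        apply pow_le_pow_right₀ (by norm_num) hs
    have hinv : ((2:ℝ)^s)⁻¹ ≤ 1/2 := by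
      rw [show (1:ℝ)/2 = 2⁻¹ by norm_num]
      exact inv_anti₀ (by norm_num) h22
    have hBsge : (s:ℝ) + 1/2 ≤ Bs s := by
      rw [Bs, two_zpow_neg]; linarith
    have hs1 : (1:ℝ) ≤ s := by exact_mod_cast hs
    have hkey : ((s:ℝ)+1) * Real.log 2 < Bs s := by
      nlinarith [mul_lt_mul_of_pos_left hlog (show (0:ℝ) < (s:ℝ)+1 by linarith)]
    have hlt : Real.exp (-(Bs s)) < Real.exp (-(((s:ℝ)+1) * Real.log 2)) :=
      Real.exp_lt_exp.mpr (by linarith)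
    have heq : Real.exp (((s:ℝ)+1) * Real.log 2) = 2^(s+1) := by
      rw [mul_comm, ← Real.rpow_def_of_pos (by norm_num : (0:ℝ) < 2)]
      rw [show ((s:ℝ)+1) = ((s+1 : ℕ) : ℝ) by push_cast; ring, Real.rpow_natCast]
    have heq2 : Real.exp (-(((s:ℝ)+1) * Real.log 2)) = (2:ℝ)^(-(s:ℤ))/2 := by
      rw [Real.exp_neg, heq, two_zpow_neg, pow_succ, mul_inv]
      ring
    rw [heq2] at hlt
    exact hlt
end
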